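/- For N equally spaced points on a circle of radius R > 0 in the plane, the logarithmic energy Σ_{i≠j} log‖x_i − x_j‖^{−1} equals −N log N − N(N−1) log R. -/

import Mathlib

open Real Complex

private lemma aux_abs_pow (N : ℕ) (a : ℕ) :
    ‖(Complex.exp (2 * Real.pi * Complex.I / N) ^ a)‖ = 1 := by
  rw [← Complex.exp_nat_mul, Complex.norm_exp]
  have : ((a : ℂ) * (2 * Real.pi * Complex.I / N)).re = 0 := by
    simp [Complex.div_re, Complex.mul_re]
  rw [this, Real.exp_zero]

private lemma aux_pow_mod (N : ℕ) (hN : 1 ≤ N) (a : ℕ) :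
    Complex.exp (2 * Real.pi * Complex.I / N) ^ (a % N)
      = Complex.exp (2 * Real.pi * Complex.I / N) ^ a := by
  have hζ := Complex.isPrimitiveRoot_exp N (by omega)
  conv_rhs => rw [← Nat.div_add_mod a N]
  rw [pow_add, pow_mul, hζ.pow_eq_one, one_pow, one_mul]

private lemma aux_mod_add_left (N a b : ℕ) : (a % N + b) % N = (a + b) % N :=
  Nat.ModEq.add_right b (Nat.mod_modEq a N)

private lemma aux_mod_eq (N a : ℕ) (h0 : 0 < a) (h2 : a < 2 * N) (hm : a % N = 0) :
    a = N := by
  have hd : N ∣ a := Nat.dvd_of_mod_eq_zero hm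
  obtain ⟨c, rfl⟩ := hd
  have hc2 : c < 2 := by
    by_contra hc
    push_neg at hc
    have : N * 2 ≤ N * c := Nat.mul_le_mul_left _ hc
    omega
  interval_cases c <;> omega

private lemma aux_logN (N : ℕ) (hN : 1 ≤ N) :
    ∑ m ∈ Finset.range (N - 1),
      Real.log (‖(1 - Complex.exp (2 * Real.pi * Complex.I / N) ^ (m + 1))‖)
      = Real.log N := by
  set ζ := Complex.exp (2 * Real.pi * Complex.I / N) with hζdef
  have hζ : IsPrimitiveRoot ζ ((N - 1) + 1) := by
    rw [Nat.sub_add_cancel hN]; exact Complex.isPrimitiveRoot_exp N (by omega)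
  have hne : ∀ m ∈ Finset.range (N - 1), ‖(1 - ζ ^ (m + 1))‖ ≠ 0 := by
    intro m hm
    rw [Finset.mem_range] at hm
    simp only [ne_eq, norm_eq_zero, sub_eq_zero]
    exact fun h => hζ.pow_ne_one_of_pos_of_lt (Nat.succ_ne_zero m) (by omega) h.symm
  rw [← Real.log_prod hne, ← norm_prod, hζ.prod_one_sub_pow_eq_order]
  have : ((N - 1 : ℕ) : ℂ) + 1 = (N : ℂ) := by
    push_cast [Nat.cast_sub hN]; ring
  rw [this]
  simp

private lemma aux_inner (N : ℕ) (hN : 1 ≤ N) (i : ℕ) (hi : i < N) :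
    ∑ j ∈ (Finset.range N).erase i,
      Real.log (‖(Complex.exp (2 * Real.pi * Complex.I / N) ^ i -
        Complex.exp (2 * Real.pi * Complex.I / N) ^ j)‖)
      = Real.log N := by
  set ζ := Complex.exp (2 * Real.pi * Complex.I / N) with hζdef
  have key : ∀ j ∈ (Finset.range N).erase i,
      ‖(ζ ^ i - ζ ^ j)‖ = ‖(1 - ζ ^ ((j + (N - i)) % N))‖ := by
    intro j hj
    have hj' : j < N := Finset.mem_range.mp (Finset.mem_of_mem_erase hj)
    have h1 : ζ ^ i * (1 - ζ ^ ((j + (N - i)) % N)) = ζ ^ i - ζ ^ j := by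
      have hmod : (i + (j + (N - i)) % N) % N = j := by
        have e1 : (i + (j + (N - i)) % N) % N = (i + (j + (N - i))) % N := by
          rw [Nat.add_comm i ((j + (N - i)) % N), aux_mod_add_left,
            Nat.add_comm (j + (N - i)) i]
        rw [e1, show i + (j + (N - i)) = j + N by omega, Nat.add_mod_right,
          Nat.mod_eq_of_lt hj']
      have h2 : ζ ^ i * ζ ^ ((j + (N - i)) % N) = ζ ^ j := by
        rw [← pow_add, ← aux_pow_mod N hN (i + (j + (N - i)) % N), hmod]
      rw [mul_sub, mul_one, h2]
    rw [← h1, norm_mul, aux_abs_pow, one_mul]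
  rw [Finset.sum_congr rfl (fun j hj => by rw [key j hj])]
  rw [show (Real.log N) = ∑ m ∈ Finset.range (N - 1),
      Real.log (‖(1 - ζ ^ (m + 1))‖) from (aux_logN N hN).symm]
  have hmem : ∀ j ∈ (Finset.range N).erase i,
      (j + (N - i)) % N ≠ 0 ∧ (j + (N - i)) % N < N := by
    intro j hj
    have hj' : j < N := Finset.mem_range.mp (Finset.mem_of_mem_erase hj)
    have hji : j ≠ i := Finset.ne_of_mem_erase hj
    refine ⟨fun h => ?_, Nat.mod_lt _ (by omega)⟩
    have := aux_mod_eq N (j + (N - i)) (by omega) (by omega) h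
    omega
  refine Finset.sum_nbij' (fun j => (j + (N - i)) % N - 1) (fun m => (m + 1 + i) % N)
    ?_ ?_ ?_ ?_ ?_
  · intro j hj
    have := hmem j hj
    show (j + (N - i)) % N - 1 ∈ Finset.range (N - 1)
    rw [Finset.mem_range]
    omega
  · intro m hm
    rw [Finset.mem_range] at hm
    show (m + 1 + i) % N ∈ (Finset.range N).erase i
    have hlt : (m + 1 + i) % N < N := Nat.mod_lt _ (by omega)
    refine Finset.mem_erase.mpr ⟨fun h => ?_, Finset.mem_range.mpr hlt⟩
    have h3 : (m + 1 + i) % N = (0 + i) % N := by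
      rw [h, Nat.zero_add, Nat.mod_eq_of_lt hi]
    have h4 : (m + 1) % N = 0 % N := Nat.ModEq.add_right_cancel' i h3
    rw [Nat.mod_eq_of_lt (by omega : m + 1 < N), Nat.zero_mod] at h4
    omega
  · intro j hj
    have h := hmem j hj
    have hj' : j < N := Finset.mem_range.mp (Finset.mem_of_mem_erase hj)
    rw [show (j + (N - i)) % N - 1 + 1 = (j + (N - i)) % N by omega,
      aux_mod_add_left, show j + (N - i) + i = j + N by omega, Nat.add_mod_right,
      Nat.mod_eq_of_lt hj']
  · intro m hm
    rw [Finset.mem_range] at hm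
    rw [aux_mod_add_left, show m + 1 + i + (N - i) = m + 1 + N by omega,
      Nat.add_mod_right, Nat.mod_eq_of_lt (by omega : m + 1 < N)]
    omega
  · intro j hj
    have h := hmem j hj
    rw [show (j + (N - i)) % N - 1 + 1 = (j + (N - i)) % N by omega]

theorem stmt4 (N : ℕ) (hN : 1 ≤ N) (R : ℝ) (hR : 0 < R) :
    ∑ i ∈ Finset.range N, ∑ j ∈ Finset.range N,
      (if i ≠ j then
        Real.log (‖((R : ℂ) * Complex.exp (2 * Real.pi * Complex.I * i / N) -
          (R : ℂ) * Complex.exp (2 * Real.pi * Complex.I * j / N))‖)⁻¹ else 0)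
      = -(N : ℝ) * Real.log N - (N : ℝ) * ((N : ℝ) - 1) * Real.log R := by
  set ζ := Complex.exp (2 * Real.pi * Complex.I / N) with hζdef
  have hζ : IsPrimitiveRoot ζ N := Complex.isPrimitiveRoot_exp N (by omega)
  have hexp : ∀ k : ℕ, Complex.exp (2 * Real.pi * Complex.I * k / N) = ζ ^ k := by
    intro k
    rw [hζdef, ← Complex.exp_nat_mul]
    congr 1
    ring
  have hne : ∀ i j : ℕ, i < N → j < N → i ≠ j → ‖(ζ ^ i - ζ ^ j)‖ ≠ 0 := by
    intro i j hi hj hij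
    simp only [ne_eq, norm_eq_zero, sub_eq_zero]
    exact fun h => hij (hζ.pow_inj hi hj h)
  have step1 : ∑ i ∈ Finset.range N, ∑ j ∈ Finset.range N,
      (if i ≠ j then
        Real.log (‖((R : ℂ) * Complex.exp (2 * Real.pi * Complex.I * i / N) -
          (R : ℂ) * Complex.exp (2 * Real.pi * Complex.I * j / N))‖)⁻¹ else 0)
      = ∑ i ∈ Finset.range N, ∑ j ∈ Finset.range N,
      (if i ≠ j then -Real.log R - Real.log (‖(ζ ^ i - ζ ^ j)‖) else 0) := by
    refine Finset.sum_congr rfl fun i hi => Finset.sum_congr rfl fun j hj => ?_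
    rw [Finset.mem_range] at hi hj
    split_ifs with h
    · rw [hexp, hexp, ← mul_sub, norm_mul, Complex.norm_real, Real.norm_eq_abs, abs_of_pos hR,
        Real.log_inv, Real.log_mul (ne_of_gt hR) (hne i j hi hj h)]
      ring
    · rfl
  rw [step1]
  have step2 : ∀ i ∈ Finset.range N, ∑ j ∈ Finset.range N,
      (if i ≠ j then -Real.log R - Real.log (‖(ζ ^ i - ζ ^ j)‖) else 0)
      = -((N : ℝ) - 1) * Real.log R - Real.log N := by
    intro i hi
    have hi' : i < N := Finset.mem_range.mp hi
    have e0 : (∑ j ∈ Finset.range N,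
        if i ≠ j then -Real.log R - Real.log (‖(ζ ^ i - ζ ^ j)‖) else 0)
        = ∑ j ∈ (Finset.range N).erase i,
          (-Real.log R - Real.log (‖(ζ ^ i - ζ ^ j)‖)) := by
      rw [← Finset.sum_erase_add (Finset.range N) _ hi, if_neg (by simp), add_zero]
      exact Finset.sum_congr rfl fun j hj => if_pos (Finset.ne_of_mem_erase hj).symm
    rw [e0, Finset.sum_sub_distrib, Finset.sum_const, Finset.card_erase_of_mem hi,
      Finset.card_range, aux_inner N hN i hi', nsmul_eq_mul,
      Nat.cast_sub hN, Nat.cast_one]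
    ring
  rw [Finset.sum_congr rfl step2, Finset.sum_const, Finset.card_range, nsmul_eq_mul]
  ring
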